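/- arXiv:0810.1793 — 3 statements merged into one kernel-verified Lean document; each statement's English description precedes it below -/
import Mathlib

section
/- Let A ∈ ℤ^{d_A×J} with columns a_1,…,a_J and B ∈ ℤ^{d_B×K} with columns b_1,…,b_K be homogeneous configurations, i.e., there exist w ∈ ℚ^{d_A} with ⟨w, a_j⟩ = 1 for all j and v ∈ ℚ^{d_B} with ⟨v, b_k⟩ = 1 for all k. Suppose B_A is a Markov basis for A and B_B is a Markov basis for B. Then the set consisting of (i) all basic moves e_{j1 k1} + e_{j2 k2} − e_{j1 k2} − e_{j2 k1} (j1 ≠ j2, k1 ≠ k2) and their negatives, (ii) all distributions z^A(k_1,…,k_{deg z^A}) of elements z^A ∈ B_A over column indices k_1,…,k_{deg z^A} ∈ {1,…,K}, and (iii) all distributions z^B(j_1,…,j_{deg z^B}) of elements z^B ∈ B_B over row indices j_1,…,j_{deg z^B} ∈ {1,…,J}, forms a Markov basis for the Segre product A⊗B: it connects every fiber { x ∈ ℕ^{J×K} : Σ_j x_{j+} a_j = t_A, Σ_k x_{+k} b_k = t_B } through nonnegative tables. -/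
/-- `M` connects table `x` to table `y` through nonnegative tables with
consecutive differences in `M`. -/
def PathConn {ι : Type} (M : Set (ι → ℤ)) (x y : ι → ℕ) : Prop :=
  ∃ (n : ℕ) (f : Fin (n + 1) → ι → ℕ),
    f 0 = x ∧ f (Fin.last n) = y ∧
    ∀ i : Fin n, (fun c => (f i.succ c : ℤ) - (f i.castSucc c : ℤ)) ∈ M

/-- `M` is a Markov basis for the configuration with columns `cols`:
a symmetric set of moves connecting any two tables with equal sufficient
statistic. -/
def IsMarkovBasisFor {ι : Type} [Fintype ι] {d : ℕ}
    (cols : ι → Fin d → ℤ) (M : Set (ι → ℤ)) : Prop :=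
  (∀ z ∈ M, z ≠ 0 ∧ ∀ r : Fin d, ∑ c : ι, z c * cols c r = 0) ∧
  (∀ z ∈ M, -z ∈ M) ∧
  ∀ x y : ι → ℕ,
    (∀ r : Fin d, ∑ c : ι, (x c : ℤ) * cols c r = ∑ c : ι, (y c : ℤ) * cols c r) →
    PathConn M x y

/-- `w` is a distribution z^A(k_1,…,k_d) of the move `z` on row levels over
column indices: writing z = Σ_{h} (e_{j_h} − e_{j'_h}) with j_1 ≤ … ≤ j_d the
positive part with multiplicity and j'_1 ≤ … ≤ j'_d the negative part,
w = Σ_h (e_{j_h k_h} − e_{j'_h k_h}) for some k_1,…,k_d. -/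
def IsColDistribution {J K : ℕ} (z : Fin J → ℤ) (w : Fin J × Fin K → ℤ) : Prop :=
  ∃ (d : ℕ) (pos neg : Fin d → Fin J) (κ : Fin d → Fin K),
    Monotone pos ∧ Monotone neg ∧
    (∀ j : Fin J, (Finset.univ.filter (fun h => pos h = j)).card = (z j).toNat) ∧
    (∀ j : Fin J, (Finset.univ.filter (fun h => neg h = j)).card = (-z j).toNat) ∧
    w = fun p => ∑ h : Fin d,
      ((if p = (pos h, κ h) then (1 : ℤ) else 0) -
       (if p = (neg h, κ h) then (1 : ℤ) else 0))

/-- `w` is a distribution z^B(j_1,…,j_d) of the move `z` on column levels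
over row indices. -/
def IsRowDistribution {J K : ℕ} (z : Fin K → ℤ) (w : Fin J × Fin K → ℤ) : Prop :=
  ∃ (d : ℕ) (pos neg : Fin d → Fin K) (ρ : Fin d → Fin J),
    Monotone pos ∧ Monotone neg ∧
    (∀ k : Fin K, (Finset.univ.filter (fun h => pos h = k)).card = (z k).toNat) ∧
    (∀ k : Fin K, (Finset.univ.filter (fun h => neg h = k)).card = (-z k).toNat) ∧
    w = fun p => ∑ h : Fin d,
      ((if p = (ρ h, pos h) then (1 : ℤ) else 0) -
       (if p = (ρ h, neg h) then (1 : ℤ) else 0))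

/-- The basic moves e_{j1 k1} + e_{j2 k2} − e_{j1 k2} − e_{j2 k1}
(j1 ≠ j2, k1 ≠ k2) and their negatives. -/
def BasicMoves (J K : ℕ) : Set (Fin J × Fin K → ℤ) :=
  {z | ∃ (j1 j2 : Fin J) (k1 k2 : Fin K), j1 ≠ j2 ∧ k1 ≠ k2 ∧
    (z = Pi.single (j1, k1) (1 : ℤ) + Pi.single (j2, k2) (1 : ℤ)
          - Pi.single (j1, k2) (1 : ℤ) - Pi.single (j2, k1) (1 : ℤ) ∨
     z = -(Pi.single (j1, k1) (1 : ℤ) + Pi.single (j2, k2) (1 : ℤ)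
          - Pi.single (j1, k2) (1 : ℤ) - Pi.single (j2, k1) (1 : ℤ)))}


section Aux
open Finset


open Finset

variable {n d : ℕ}

/-- sum of `c` below `j` -/
def blockSum (c : Fin n → ℕ) (j : Fin n) : ℕ := ∑ j' ∈ univ.filter (· < j), c j'

lemma blockSum_add_le (c : Fin n → ℕ) (j : Fin n) : blockSum c j + c j ≤ ∑ j', c j' := by
  classical
  rw [← Finset.sum_filter_add_sum_filter_not univ (· < j) c]
  refine Nat.add_le_add_left ?_ _
  exact Finset.single_le_sum (fun i _ => Nat.zero_le _) (by simp)

lemma blockSum_lt (c : Fin n → ℕ) (s : Σ j, Fin (c j)) :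
    blockSum c s.1 + (s.2 : ℕ) < ∑ j', c j' :=
  lt_of_lt_of_le (by have := s.2.2; omega) (blockSum_add_le c s.1)

def ofBlock (c : Fin n → ℕ) (hd : ∑ j', c j' = d) (s : Σ j, Fin (c j)) : Fin d :=
  ⟨blockSum c s.1 + (s.2 : ℕ), hd ▸ blockSum_lt c s⟩

lemma ofBlock_lt (c : Fin n → ℕ) (hd : ∑ j', c j' = d) {s t : Σ j, Fin (c j)}
    (h : s.1 < t.1) : ofBlock c hd s < ofBlock c hd t := by
  have h1 : blockSum c s.1 + c s.1 ≤ blockSum c t.1 := by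
    have : univ.filter (· < s.1) ∪ {s.1} ⊆ univ.filter (· < t.1) := by
      intro a ha
      simp only [mem_union, mem_filter, mem_univ, true_and, mem_singleton] at ha ⊢
      rcases ha with ha | rfl
      · exact lt_trans ha h
      · exact h
    calc blockSum c s.1 + c s.1 = ∑ j' ∈ univ.filter (· < s.1) ∪ {s.1}, c j' := by
          rw [Finset.sum_union (by simp [Finset.disjoint_singleton_right])]
          simp [blockSum]
      _ ≤ _ := Finset.sum_le_sum_of_subset this
  have h2 := s.2.2
  simp only [ofBlock, Fin.mk_lt_mk]
  have := Nat.le_add_right (blockSum c t.1) (t.2 : ℕ)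
  omega

lemma ofBlock_injective (c : Fin n → ℕ) (hd : ∑ j', c j' = d) :
    Function.Injective (ofBlock c hd) := by
  intro s t h
  rcases lt_trichotomy s.1 t.1 with hlt | heq | hgt
  · exact absurd h (ne_of_lt (ofBlock_lt c hd hlt))
  · obtain ⟨j, r⟩ := s; obtain ⟨j', r'⟩ := t
    simp only at heq; subst heq
    simp only [ofBlock, Fin.mk.injEq] at h
    have : (r : ℕ) = (r' : ℕ) := by omega
    exact congrArg _ (Fin.ext this)
  · exact absurd h.symm (ne_of_lt (ofBlock_lt c hd hgt))

lemma ofBlock_bijective (c : Fin n → ℕ) (hd : ∑ j', c j' = d) :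
    Function.Bijective (ofBlock c hd) := by
  rw [Fintype.bijective_iff_injective_and_card]
  refine ⟨ofBlock_injective c hd, ?_⟩
  simp [Fintype.card_sigma, hd]

/-- the block equiv -/
noncomputable def blockEquiv (c : Fin n → ℕ) (hd : ∑ j', c j' = d) : (Σ j, Fin (c j)) ≃ Fin d :=
  Equiv.ofBijective _ (ofBlock_bijective c hd)

lemma blockEquiv_fst_monotone (c : Fin n → ℕ) (hd : ∑ j', c j' = d) :
    Monotone (fun h : Fin d => ((blockEquiv c hd).symm h).1) := by
  intro h h' hle
  by_contra hc
  push_neg at hc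
  have := ofBlock_lt c hd hc
  have e1 : ofBlock c hd ((blockEquiv c hd).symm h') = h' := (blockEquiv c hd).apply_symm_apply h'
  have e2 : ofBlock c hd ((blockEquiv c hd).symm h) = h := (blockEquiv c hd).apply_symm_apply h
  rw [e1, e2] at this
  exact absurd hle (not_le.mpr this)

lemma blockEquiv_fiber_card (c : Fin n → ℕ) (hd : ∑ j', c j' = d) (j : Fin n) :
    (univ.filter (fun h : Fin d => ((blockEquiv c hd).symm h).1 = j)).card = c j := by
  classical
  rw [Finset.card_filter]
  rw [← Equiv.sum_comp (blockEquiv c hd) (fun h => if ((blockEquiv c hd).symm h).1 = j then 1 else 0)]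
  simp only [Equiv.symm_apply_apply]
  rw [show (univ : Finset (Σ j', Fin (c j'))) = univ.sigma fun _ => univ from rfl,
    Finset.sum_sigma]
  have h1 : ∀ j' : Fin n, ∑ r : Fin (c j'), (if (Sigma.mk (β := fun t => Fin (c t)) j' r).1 = j then 1 else 0) = if j' = j then c j' else 0 := by
    intro j'; by_cases h : j' = j <;> simp [h]
  rw [Finset.sum_congr rfl (fun j' _ => h1 j'), Finset.sum_ite_eq' univ j c]
  simp

lemma step_col {J K : ℕ} (z : Fin J → ℤ) (hz : ∑ j, z j = 0)
    (x : Fin J × Fin K → ℕ) (hx : ∀ j, (0 : ℤ) ≤ (∑ k, (x (j,k) : ℤ)) + z j) :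
    ∃ (w : Fin J × Fin K → ℤ) (x' : Fin J × Fin K → ℕ),
      IsColDistribution z w ∧
      (∀ p, (x' p : ℤ) = (x p : ℤ) + w p) ∧
      (∀ j, (∑ k, (x' (j,k) : ℤ)) = (∑ k, (x (j,k) : ℤ)) + z j) ∧
      (∀ k, (∑ j, (x' (j,k) : ℤ)) = ∑ j, (x (j,k) : ℤ)) := by
  classical
  set cp : Fin J → ℕ := fun j => (z j).toNat with hcp
  set cm : Fin J → ℕ := fun j => (-z j).toNat with hcm
  set D : ℕ := ∑ j, cp j with hD
  have hsum : ∑ j, cm j = D := by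
    have h1 : (∑ j, (cp j : ℤ)) - ∑ j, (cm j : ℤ) = 0 := by
      rw [← Finset.sum_sub_distrib]
      simpa [hcp, hcm, Int.toNat_sub_toNat_neg] using hz
    have h2 : ((∑ j, cm j : ℕ) : ℤ) = ((∑ j, cp j : ℕ) : ℤ) := by push_cast; linarith
    rw [hD]
    exact_mod_cast h2
  set rs : Fin J → ℕ := fun j => ∑ k, x (j,k) with hrs
  have hle : ∀ j, cm j ≤ rs j := by
    intro j
    rw [hcm]
    apply Int.toNat_le.mpr
    have := hx j
    have hcast : ((rs j : ℤ)) = ∑ k, (x (j,k) : ℤ) := by push_cast [hrs]; rfl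
    omega
  set eP := blockEquiv cp rfl with heP
  set eN := blockEquiv cm hsum with heN
  set eC : (j : Fin J) → ((Σ k, Fin (x (j,k))) ≃ Fin (rs j)) :=
    fun j => blockEquiv (fun k => x (j,k)) rfl with heC
  set pos : Fin D → Fin J := fun h => (eP.symm h).1 with hpos
  set neg : Fin D → Fin J := fun h => (eN.symm h).1 with hneg
  -- the unit-to-cell maps
  set colOf : (Σ j, Fin (rs j)) → Fin K := fun s => ((eC s.1).symm s.2).1 with hcolOf
  set ψ : (Σ j, Fin (cm j)) → (Σ j, Fin (rs j)) :=
    fun s => ⟨s.1, Fin.castLE (hle s.1) s.2⟩ with hψ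
  set Φ : Fin D → (Σ j, Fin (rs j)) := fun h => ψ (eN.symm h) with hΦ
  set κ : Fin D → Fin K := fun h => colOf (Φ h) with hκ
  set w : Fin J × Fin K → ℤ := fun p => ∑ h : Fin D,
      ((if p = (pos h, κ h) then (1 : ℤ) else 0) -
       (if p = (neg h, κ h) then (1 : ℤ) else 0)) with hw
  have hψinj : Function.Injective ψ := by
    rintro ⟨a, b⟩ ⟨a', b'⟩ hab
    rw [hψ] at hab
    simp only [Sigma.mk.inj_iff] at hab
    obtain ⟨h1, h2⟩ := hab
    subst h1
    rw [heq_iff_eq] at h2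
    have : b = b' := Fin.castLE_injective _ h2
    rw [this]
  have hΦinj : Function.Injective Φ := hψinj.comp (Equiv.injective eN.symm)
  have hnegΦ : ∀ h, neg h = (Φ h).1 := fun h => rfl
  -- counting cells
  have hfibercell : ∀ p : Fin J × Fin K,
      (Finset.univ.filter (fun s : Σ j, Fin (rs j) => (s.1, colOf s) = p)).card = x p := by
    rintro ⟨j, k⟩
    rw [Finset.card_filter]
    rw [show (univ : Finset (Σ j, Fin (rs j))) = univ.sigma fun _ => univ from rfl,
      Finset.sum_sigma]
    have h1 : ∀ j' : Fin J, ∑ i : Fin (rs j'),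
        (if ((Sigma.mk (β := fun t => Fin (rs t)) j' i).1,
              colOf (Sigma.mk (β := fun t => Fin (rs t)) j' i)) = (j,k) then 1 else 0)
        = if j' = j then x (j,k) else 0 := by
      intro j'
      by_cases hj : j' = j
      · subst hj
        rw [if_pos rfl, ← Finset.card_filter]
        have : ∀ i : Fin (rs j'),
            ((Sigma.mk (β := fun t => Fin (rs t)) j' i).1,
              colOf (Sigma.mk (β := fun t => Fin (rs t)) j' i)) = (j',k)
            ↔ ((eC j').symm i).1 = k := by
          intro i
          constructor
          · intro hh; exact (Prod.ext_iff.mp hh).2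
          · intro hh; exact Prod.ext rfl hh
        rw [Finset.filter_congr (fun i _ => this i)]
        exact blockEquiv_fiber_card (fun k => x (j',k)) rfl k
      · have : ∀ i : Fin (rs j'),
            (((Sigma.mk (β := fun t => Fin (rs t)) j' i).1,
              colOf (Sigma.mk (β := fun t => Fin (rs t)) j' i)) = (j,k)) = False := by
          intro i
          simp only [eq_iff_iff, iff_false]
          intro hh
          exact hj (Prod.ext_iff.mp hh).1
        simp [this, hj]
    rw [Finset.sum_congr rfl (fun j' _ => h1 j'), Finset.sum_ite_eq' univ j (fun _ => x (j,k))]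
    simp
  -- w as difference of two counts
  have hwcount : ∀ p, w p =
      ((Finset.univ.filter (fun h : Fin D => p = (pos h, κ h))).card : ℤ) -
      ((Finset.univ.filter (fun h : Fin D => p = (neg h, κ h))).card : ℤ) := by
    intro p
    have e : w p = (∑ h : Fin D, (if p = (pos h, κ h) then (1:ℤ) else 0))
        - (∑ h : Fin D, (if p = (neg h, κ h) then (1:ℤ) else 0)) := Finset.sum_sub_distrib _ _
    rw [e]
    have e1 : (∑ h : Fin D, (if p = (pos h, κ h) then (1:ℤ) else 0))
        = ((Finset.univ.filter (fun h : Fin D => p = (pos h, κ h))).card : ℤ) := by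
      rw [Finset.card_filter]; push_cast; rfl
    have e2 : (∑ h : Fin D, (if p = (neg h, κ h) then (1:ℤ) else 0))
        = ((Finset.univ.filter (fun h : Fin D => p = (neg h, κ h))).card : ℤ) := by
      rw [Finset.card_filter]; push_cast; rfl
    rw [e1, e2]
  -- negative count bounded by x p
  have hnegle : ∀ p, (Finset.univ.filter (fun h : Fin D => p = (neg h, κ h))).card ≤ x p := by
    intro p
    have hsub : (Finset.univ.filter (fun h : Fin D => p = (neg h, κ h))).card
        ≤ (Finset.univ.filter (fun s : Σ j, Fin (rs j) => (s.1, colOf s) = p)).card := by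
      refine Finset.card_le_card_of_injOn Φ (fun h hh => ?_) (fun a _ b _ hab => hΦinj hab)
      have hh2 := (Finset.mem_filter.mp hh).2
      refine Finset.mem_filter.mpr ⟨Finset.mem_univ _, ?_⟩
      rw [hh2]
    rw [hfibercell p] at hsub
    exact hsub
  set x' : Fin J × Fin K → ℕ := fun p => ((x p : ℤ) + w p).toNat with hx'
  have hnonneg : ∀ p, (0 : ℤ) ≤ (x p : ℤ) + w p := by
    intro p
    rw [hwcount p]
    have := hnegle p
    omega
  have hx'cast : ∀ p, (x' p : ℤ) = (x p : ℤ) + w p := by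
    intro p
    rw [hx']
    exact Int.toNat_of_nonneg (hnonneg p)
  -- row sums of w
  have hwrow : ∀ j, (∑ k, w (j,k)) = z j := by
    intro j
    rw [hw]
    simp only []
    rw [Finset.sum_comm]
    have h1 : ∀ h : Fin D, (∑ k : Fin K,
        ((if (j,k) = (pos h, κ h) then (1:ℤ) else 0) - (if (j,k) = (neg h, κ h) then (1:ℤ) else 0)))
        = (if pos h = j then (1:ℤ) else 0) - (if neg h = j then (1:ℤ) else 0) := by
      intro h
      rw [Finset.sum_sub_distrib]
      congr 1
      · by_cases hj : pos h = j
        · subst hj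
          simp [Prod.ext_iff]
        · rw [if_neg hj]
          apply Finset.sum_eq_zero
          intro k _
          rw [if_neg]
          intro hh
          exact hj ((Prod.ext_iff.mp hh).1).symm
      · by_cases hj : neg h = j
        · subst hj
          simp [Prod.ext_iff]
        · rw [if_neg hj]
          apply Finset.sum_eq_zero
          intro k _
          rw [if_neg]
          intro hh
          exact hj ((Prod.ext_iff.mp hh).1).symm
    rw [Finset.sum_congr rfl (fun h _ => h1 h), Finset.sum_sub_distrib]
    have e1 : (∑ h : Fin D, (if pos h = j then (1:ℤ) else 0))
        = ((Finset.univ.filter (fun h : Fin D => pos h = j)).card : ℤ) := by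
      rw [Finset.card_filter]; push_cast; rfl
    have e2 : (∑ h : Fin D, (if neg h = j then (1:ℤ) else 0))
        = ((Finset.univ.filter (fun h : Fin D => neg h = j)).card : ℤ) := by
      rw [Finset.card_filter]; push_cast; rfl
    rw [e1, e2, blockEquiv_fiber_card cp rfl j, blockEquiv_fiber_card cm hsum j]
    simp only [hcp, hcm]
    exact Int.toNat_sub_toNat_neg (z j)
  have hwcol : ∀ k, (∑ j, w (j,k)) = 0 := by
    intro k
    rw [hw]
    simp only []
    rw [Finset.sum_comm]
    apply Finset.sum_eq_zero
    intro h _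
    rw [Finset.sum_sub_distrib]
    have h2 : ∀ (q : Fin J) (κh : Fin K), (∑ j : Fin J, (if ((j,k) : Fin J × Fin K) = (q, κh) then (1:ℤ) else 0))
        = if κh = k then 1 else 0 := by
      intro q κh
      by_cases hk : κh = k
      · subst hk
        simp [Prod.ext_iff]
      · rw [if_neg hk]
        apply Finset.sum_eq_zero
        intro j _
        rw [if_neg]
        intro hh
        exact hk ((Prod.ext_iff.mp hh).2).symm
    rw [h2 (pos h) (κ h), h2 (neg h) (κ h)]
    ring
  refine ⟨w, x', ?_, hx'cast, ?_, ?_⟩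
  · refine ⟨D, pos, neg, κ, ?_, ?_, ?_, ?_, rfl⟩
    · exact blockEquiv_fst_monotone cp rfl
    · exact blockEquiv_fst_monotone cm hsum
    · intro j; exact blockEquiv_fiber_card cp rfl j
    · intro j; exact blockEquiv_fiber_card cm hsum j
  · intro j
    have : ∑ k, ((x' (j,k) : ℤ)) = ∑ k, ((x (j,k) : ℤ) + w (j,k)) :=
      Finset.sum_congr rfl (fun k _ => hx'cast (j,k))
    rw [this, Finset.sum_add_distrib, hwrow j]
  · intro k
    have : ∑ j, ((x' (j,k) : ℤ)) = ∑ j, ((x (j,k) : ℤ) + w (j,k)) :=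
      Finset.sum_congr rfl (fun j _ => hx'cast (j,k))
    rw [this, Finset.sum_add_distrib, hwcol k]
    simp

def Step {ι : Type} (M : Set (ι → ℤ)) (x y : ι → ℕ) : Prop :=
  (fun c => (y c : ℤ) - (x c : ℤ)) ∈ M

lemma lift_col {J K : ℕ} (M : Set (Fin J → ℤ)) (hzero : ∀ z ∈ M, ∑ j, z j = 0)
    (x : Fin J × Fin K → ℕ) (u : Fin J → ℕ)
    (h : Relation.ReflTransGen (Step M) (fun j => ∑ k, x (j,k)) u) :
    ∃ x' : Fin J × Fin K → ℕ,
      (∀ j, ∑ k, x' (j,k) = u j) ∧ (∀ k, ∑ j, x' (j,k) = ∑ j, x (j,k)) ∧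
      Relation.ReflTransGen (Step {w | ∃ z ∈ M, IsColDistribution z w}) x x' := by
  induction h with
  | refl => exact ⟨x, fun j => rfl, fun k => rfl, Relation.ReflTransGen.refl⟩
  | @tail b c hab hbc ih =>
    obtain ⟨x1, hrow, hcol, hpath⟩ := ih
    set z : Fin J → ℤ := fun j => (c j : ℤ) - (b j : ℤ) with hzdef
    have hzM : z ∈ M := hbc
    have hz0 : ∑ j, z j = 0 := hzero z hzM
    have hb : ∀ j, (∑ k, (x1 (j,k) : ℤ)) = (b j : ℤ) := by
      intro j
      rw [← hrow j]
      push_cast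
      rfl
    have hx1 : ∀ j, (0:ℤ) ≤ (∑ k, (x1 (j,k) : ℤ)) + z j := by
      intro j
      rw [hb j]
      simp only [hzdef]
      have : (0:ℤ) ≤ (c j : ℤ) := Int.ofNat_nonneg _
      omega
    obtain ⟨w, x2, hdist, hcast, hrow2, hcol2⟩ := step_col z hz0 x1 hx1
    refine ⟨x2, ?_, ?_, Relation.ReflTransGen.tail hpath ?_⟩
    · intro j
      have hcj : ((∑ k, x2 (j,k) : ℕ) : ℤ) = (c j : ℤ) := by
        push_cast
        rw [hrow2 j, hb j]
        simp only [hzdef]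
        ring
      exact_mod_cast hcj
    · intro k
      have hck : ((∑ j, x2 (j,k) : ℕ) : ℤ) = ((∑ j, x (j,k) : ℕ) : ℤ) := by
        push_cast
        rw [hcol2 k]
        have : ((∑ j, x1 (j,k) : ℕ) : ℤ) = ((∑ j, x (j,k) : ℕ) : ℤ) := by
          exact_mod_cast congrArg (Nat.cast : ℕ → ℤ) (hcol k)
        push_cast at this
        exact this
      exact_mod_cast hck
    · refine ⟨z, hzM, ?_⟩
      have heq : (fun p => (x2 p : ℤ) - (x1 p : ℤ)) = w := by
        funext p
        rw [hcast p]
        ring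
      exact heq ▸ hdist

lemma sum_single_row {J K : ℕ} (a : Fin J × Fin K) (j : Fin J) :
    ∑ k, Pi.single (M := fun _ => ℤ) a 1 (j,k) = if j = a.1 then 1 else 0 := by
  obtain ⟨a1, a2⟩ := a
  by_cases h : j = a1
  · subst h
    simp [Pi.single_apply, Prod.ext_iff]
  · simp [Pi.single_apply, Prod.ext_iff, h]

lemma sum_single_col {J K : ℕ} (a : Fin J × Fin K) (k : Fin K) :
    ∑ j, Pi.single (M := fun _ => ℤ) a 1 (j,k) = if k = a.2 then 1 else 0 := by
  obtain ⟨a1, a2⟩ := a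
  by_cases h : k = a2
  · subst h
    simp [Pi.single_apply, Prod.ext_iff]
  · simp [Pi.single_apply, Prod.ext_iff, h]

lemma basic_connect {J K : ℕ} (x y : Fin J × Fin K → ℕ)
    (hrow : ∀ j, ∑ k, x (j,k) = ∑ k, y (j,k))
    (hcol : ∀ k, ∑ j, x (j,k) = ∑ j, y (j,k)) :
    Relation.ReflTransGen (Step (BasicMoves J K)) x y := by
  classical
  suffices H : ∀ N : ℕ, ∀ x y : Fin J × Fin K → ℕ,
      (∑ p : Fin J × Fin K, ((x p : ℤ) - y p).natAbs) = N →
      (∀ j, ∑ k, x (j,k) = ∑ k, y (j,k)) →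
      (∀ k, ∑ j, x (j,k) = ∑ j, y (j,k)) →
      Relation.ReflTransGen (Step (BasicMoves J K)) x y by
    exact H _ x y rfl hrow hcol
  intro N
  induction N using Nat.strong_induction_on with
  | _ N ih =>
  intro x y hN hrow hcol
  by_cases hxy : x = y
  · subst hxy; exact Relation.ReflTransGen.refl
  have hex : ∃ p, y p < x p := by
    by_contra hcon
    push_neg at hcon
    have htot : ∑ p : Fin J × Fin K, x p = ∑ p, y p := by
      rw [Fintype.sum_prod_type, Fintype.sum_prod_type]
      exact Finset.sum_congr rfl (fun j _ => hrow j)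
    have := (Finset.sum_eq_sum_iff_of_le (fun i _ => hcon i)).mp htot
    exact hxy (funext fun p => this p (Finset.mem_univ p))
  obtain ⟨⟨j1, k1⟩, hp0⟩ := hex
  have hk2 : ∃ k2, x (j1,k2) < y (j1,k2) := by
    by_contra hcon
    push_neg at hcon
    have hlt : ∑ k, y (j1,k) < ∑ k, x (j1,k) :=
      Finset.sum_lt_sum (fun k _ => hcon k) ⟨k1, Finset.mem_univ k1, hp0⟩
    have := hrow j1
    omega
  obtain ⟨k2, hk2v⟩ := hk2
  have hk12 : k1 ≠ k2 := by
    intro h; rw [h] at hp0; omega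
  have hj2 : ∃ j2, y (j2,k2) < x (j2,k2) := by
    by_contra hcon
    push_neg at hcon
    have hlt : ∑ j, x (j,k2) < ∑ j, y (j,k2) :=
      Finset.sum_lt_sum (fun j _ => hcon j) ⟨j1, Finset.mem_univ j1, hk2v⟩
    have := hcol k2
    omega
  obtain ⟨j2, hj2v⟩ := hj2
  have hj12 : j1 ≠ j2 := by
    intro h; rw [← h] at hj2v; omega
  set a : Fin J × Fin K := (j1, k1) with ha
  set b : Fin J × Fin K := (j2, k2) with hb
  set cc : Fin J × Fin K := (j1, k2) with hc
  set dd : Fin J × Fin K := (j2, k1) with hd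
  have hab : a ≠ b := fun h => hj12 (Prod.ext_iff.mp h).1
  have hac : a ≠ cc := fun h => hk12 (Prod.ext_iff.mp h).2
  have had : a ≠ dd := fun h => hj12 (Prod.ext_iff.mp h).1
  have hbc : b ≠ cc := fun h => hj12 ((Prod.ext_iff.mp h).1).symm
  have hbd : b ≠ dd := fun h => hk12 ((Prod.ext_iff.mp h).2).symm
  have hcd : cc ≠ dd := fun h => hj12 (Prod.ext_iff.mp h).1
  set x' : Fin J × Fin K → ℕ := fun p =>
    if p = a then x p - 1 else if p = b then x p - 1
    else if p = cc then x p + 1 else if p = dd then x p + 1 else x p with hx'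
  have hva : x' a = x a - 1 := by simp [hx']
  have hvb : x' b = x b - 1 := by simp [hx', hab.symm]
  have hvc : x' cc = x cc + 1 := by simp [hx', hac.symm, hbc.symm]
  have hvd : x' dd = x dd + 1 := by simp [hx', had.symm, hbd.symm, hcd.symm]
  have hvo : ∀ p, p ≠ a → p ≠ b → p ≠ cc → p ≠ dd → x' p = x p := by
    intro p h1 h2 h3 h4; simp [hx', h1, h2, h3, h4]
  set zmove : Fin J × Fin K → ℤ :=
    -(Pi.single a (1:ℤ) + Pi.single b (1:ℤ) - Pi.single cc (1:ℤ) - Pi.single dd (1:ℤ))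
    with hzm
  have hdiff : (fun p => (x' p : ℤ) - (x p : ℤ)) = zmove := by
    funext p
    rw [hzm]
    simp only [Pi.neg_apply, Pi.add_apply, Pi.sub_apply, Pi.single_apply]
    by_cases h1 : p = a
    · subst h1
      rw [if_pos rfl, if_neg hab, if_neg hac, if_neg had]
      have := hva
      push_cast
      omega
    · by_cases h2 : p = b
      · subst h2
        rw [if_neg (Ne.symm hab), if_pos rfl, if_neg hbc, if_neg hbd]
        have := hvb
        push_cast
        omega
      · by_cases h3 : p = cc
        · subst h3
          rw [if_neg (Ne.symm hac), if_neg (Ne.symm hbc), if_pos rfl, if_neg hcd]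
          have := hvc
          push_cast
          omega
        · by_cases h4 : p = dd
          · subst h4
            rw [if_neg (Ne.symm had), if_neg (Ne.symm hbd), if_neg (Ne.symm hcd), if_pos rfl]
            have := hvd
            push_cast
            omega
          · rw [if_neg h1, if_neg h2, if_neg h3, if_neg h4]
            have := hvo p h1 h2 h3 h4
            push_cast
            omega
  have hstep : Step (BasicMoves J K) x x' := by
    exact ⟨j1, j2, k1, k2, hj12, hk12, Or.inr (by rw [← hzm]; exact hdiff)⟩
  have hadd : ∀ p, (x' p : ℤ) = (x p : ℤ) + zmove p := by
    intro p
    have := congrFun hdiff p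
    omega
  have hzrow : ∀ j, ∑ k, zmove (j,k) = 0 := by
    intro j
    have e : ∀ k, zmove (j,k) =
        -(Pi.single (M := fun _ => ℤ) a 1 (j,k) + Pi.single (M := fun _ => ℤ) b 1 (j,k)
          - Pi.single (M := fun _ => ℤ) cc 1 (j,k) - Pi.single (M := fun _ => ℤ) dd 1 (j,k)) :=
      fun k => rfl
    rw [Finset.sum_congr rfl (fun k _ => e k), Finset.sum_neg_distrib,
      Finset.sum_sub_distrib, Finset.sum_sub_distrib, Finset.sum_add_distrib,
      sum_single_row a j, sum_single_row b j, sum_single_row cc j, sum_single_row dd j]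
    simp only [ha, hb, hc, hd]
    ring
  have hzcol : ∀ k, ∑ j, zmove (j,k) = 0 := by
    intro k
    have e : ∀ j, zmove (j,k) =
        -(Pi.single (M := fun _ => ℤ) a 1 (j,k) + Pi.single (M := fun _ => ℤ) b 1 (j,k)
          - Pi.single (M := fun _ => ℤ) cc 1 (j,k) - Pi.single (M := fun _ => ℤ) dd 1 (j,k)) :=
      fun j => rfl
    rw [Finset.sum_congr rfl (fun j _ => e j), Finset.sum_neg_distrib,
      Finset.sum_sub_distrib, Finset.sum_sub_distrib, Finset.sum_add_distrib,
      sum_single_col a k, sum_single_col b k, sum_single_col cc k, sum_single_col dd k]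
    simp only [ha, hb, hc, hd]
    ring
  have hrow' : ∀ j, ∑ k, x' (j,k) = ∑ k, y (j,k) := by
    intro j
    have hz : ((∑ k, x' (j,k) : ℕ) : ℤ) = ((∑ k, x (j,k) : ℕ) : ℤ) := by
      push_cast
      rw [Finset.sum_congr rfl (fun k _ => hadd (j,k)), Finset.sum_add_distrib, hzrow j]
      ring
    have : (∑ k, x' (j,k)) = ∑ k, x (j,k) := by exact_mod_cast hz
    rw [this, hrow j]
  have hcol' : ∀ k, ∑ j, x' (j,k) = ∑ j, y (j,k) := by
    intro k
    have hz : ((∑ j, x' (j,k) : ℕ) : ℤ) = ((∑ j, x (j,k) : ℕ) : ℤ) := by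
      push_cast
      rw [Finset.sum_congr rfl (fun j _ => hadd (j,k)), Finset.sum_add_distrib, hzcol k]
      ring
    have : (∑ j, x' (j,k)) = ∑ j, x (j,k) := by exact_mod_cast hz
    rw [this, hcol k]
  -- the measure decreases
  have hmeas : (∑ p : Fin J × Fin K, ((x' p : ℤ) - y p).natAbs) < N := by
    rw [← hN]
    have hsubu : ({a, b, cc, dd} : Finset (Fin J × Fin K)) ⊆ Finset.univ := Finset.subset_univ _
    have hsump : ∀ f : Fin J × Fin K → ℕ,
        ∑ p ∈ ({a, b, cc, dd} : Finset (Fin J × Fin K)), f p = f a + (f b + (f cc + f dd)) := by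
      intro f
      rw [show ({a, b, cc, dd} : Finset (Fin J × Fin K))
          = insert a (insert b (insert cc ({dd} : Finset (Fin J × Fin K)))) from rfl]
      rw [Finset.sum_insert (by simp [hab, hac, had]),
          Finset.sum_insert (by simp [hbc, hbd]),
          Finset.sum_insert (by simp [hcd]),
          Finset.sum_singleton]
    have e1 := Finset.sum_sdiff (f := fun p => ((x' p : ℤ) - y p).natAbs) hsubu
    have e2 := Finset.sum_sdiff (f := fun p => ((x p : ℤ) - y p).natAbs) hsubu
    have hrest : ∑ p ∈ Finset.univ \ ({a, b, cc, dd} : Finset (Fin J × Fin K)),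
          ((x' p : ℤ) - y p).natAbs
        = ∑ p ∈ Finset.univ \ ({a, b, cc, dd} : Finset (Fin J × Fin K)),
          ((x p : ℤ) - y p).natAbs := by
      apply Finset.sum_congr rfl
      intro p hp
      simp only [Finset.mem_sdiff, Finset.mem_insert, Finset.mem_singleton, not_or] at hp
      rw [hvo p hp.2.1 hp.2.2.1 hp.2.2.2.1 hp.2.2.2.2]
    rw [← e1, ← e2]
    beta_reduce
    rw [hrest, hsump (fun p => ((x' p : ℤ) - y p).natAbs),
      hsump (fun p => ((x p : ℤ) - y p).natAbs)]
    have gva := hva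
    have gvb := hvb
    have gvc := hvc
    have gvd := hvd
    have g1 : y a < x a := hp0
    have g2 : y b < x b := hj2v
    have g3 : x cc < y cc := hk2v
    omega
  exact Relation.ReflTransGen.head hstep (ih _ hmeas x' y rfl hrow' hcol')

lemma colDist_to_rowDist {J K : ℕ} (z : Fin K → ℤ) (w : Fin K × Fin J → ℤ)
    (h : IsColDistribution z w) :
    IsRowDistribution z (fun p : Fin J × Fin K => w (p.2, p.1)) := by
  obtain ⟨d, pos, neg, κ, hmp, hmn, hcp, hcn, hform⟩ := h
  refine ⟨d, pos, neg, κ, hmp, hmn, hcp, hcn, ?_⟩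
  funext p
  rw [hform]
  apply Finset.sum_congr rfl
  intro h _
  have e1 : ((p.2, p.1) = (pos h, κ h)) = (p = (κ h, pos h)) := by
    simp [Prod.ext_iff, and_comm]
  have e2 : ((p.2, p.1) = (neg h, κ h)) = (p = (κ h, neg h)) := by
    simp [Prod.ext_iff, and_comm]
  exact congrArg₂ Sub.sub (if_congr (iff_of_eq e1) rfl rfl) (if_congr (iff_of_eq e2) rfl rfl)

lemma lift_row {J K : ℕ} (M : Set (Fin K → ℤ)) (hzero : ∀ z ∈ M, ∑ k, z k = 0)
    (x : Fin J × Fin K → ℕ) (u : Fin K → ℕ)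
    (h : Relation.ReflTransGen (Step M) (fun k => ∑ j, x (j,k)) u) :
    ∃ x' : Fin J × Fin K → ℕ,
      (∀ k, ∑ j, x' (j,k) = u k) ∧ (∀ j, ∑ k, x' (j,k) = ∑ k, x (j,k)) ∧
      Relation.ReflTransGen (Step {w | ∃ z ∈ M, IsRowDistribution z w}) x x' := by
  set xT : Fin K × Fin J → ℕ := fun q => x (q.2, q.1) with hxT
  obtain ⟨xT', h1, h2, h3⟩ := lift_col M hzero xT u h
  refine ⟨fun p => xT' (p.2, p.1), h1, h2, ?_⟩
  have hlift := Relation.ReflTransGen.lift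
    (f := fun (t : Fin K × Fin J → ℕ) => fun p : Fin J × Fin K => t (p.2, p.1))
    (r := Step {w | ∃ z ∈ M, IsColDistribution z w})
    (p := Step {w | ∃ z ∈ M, IsRowDistribution z w})
    ?_ _ _ h3
  · exact hlift
  · intro t t' hst
    obtain ⟨z, hz, hcd⟩ := hst
    refine ⟨z, hz, ?_⟩
    have := colDist_to_rowDist z (fun q => (t' q : ℤ) - (t q : ℤ)) hcd
    exact this

lemma pathConn_iff {ι : Type} (M : Set (ι → ℤ)) (x y : ι → ℕ) :
    PathConn M x y ↔ Relation.ReflTransGen (Step M) x y := by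
  constructor
  · rintro ⟨n, f, h0, hl, hs⟩
    have key : ∀ i : Fin (n + 1), Relation.ReflTransGen (Step M) x (f i) := by
      intro i
      induction i using Fin.induction with
      | zero => rw [h0]
      | succ i ih => exact Relation.ReflTransGen.tail ih (hs i)
    rw [← hl]; exact key _
  · intro h
    induction h with
    | refl => exact ⟨0, fun _ => x, rfl, rfl, fun i => i.elim0⟩
    | @tail b c hab hbc ih =>
      obtain ⟨n, f, h0, hl, hs⟩ := ih
      refine ⟨n + 1, Fin.snoc f c, ?_, ?_, ?_⟩
      · show Fin.snoc (α := fun _ => ι → ℕ) f c ((0 : Fin (n+1)).castSucc) = x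
        rw [Fin.snoc_castSucc]; exact h0
      · show Fin.snoc (α := fun _ => ι → ℕ) f c (Fin.last (n+1)) = c
        simp
      · intro i
        induction i using Fin.lastCases with
        | last =>
          have e1 : (Fin.last n).succ = Fin.last (n+1) := by ext; simp
          have e2 : Fin.snoc (α := fun _ => ι → ℕ) f c ((Fin.last n).succ) = c := by rw [e1]; simp
          have e3 : Fin.snoc (α := fun _ => ι → ℕ) f c ((Fin.last n).castSucc) = f (Fin.last n) := by
            simp
          show (fun cc => ((Fin.snoc (α := fun _ => ι → ℕ) f c ((Fin.last n).succ) cc : ℕ) : ℤ)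
              - ((Fin.snoc (α := fun _ => ι → ℕ) f c ((Fin.last n).castSucc) cc : ℕ) : ℤ)) ∈ M
          rw [e2, e3, hl]; exact hbc
        | cast j =>
          have e2 : Fin.snoc (α := fun _ => ι → ℕ) f c (j.castSucc.succ) = f j.succ := by
            rw [Fin.succ_castSucc, Fin.snoc_castSucc]
          have e3 : Fin.snoc (α := fun _ => ι → ℕ) f c (j.castSucc.castSucc) = f j.castSucc := by
            simp
          show (fun cc => ((Fin.snoc (α := fun _ => ι → ℕ) f c (j.castSucc.succ) cc : ℕ) : ℤ)
              - ((Fin.snoc (α := fun _ => ι → ℕ) f c (j.castSucc.castSucc) cc : ℕ) : ℤ)) ∈ M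
          rw [e2, e3]; exact hs j

end Aux

/-- given homogeneous configurations A and B with Markov bases
B_A and B_B, the basic moves together with all distributions of moves of B_A
over column indices and of moves of B_B over row indices form a Markov basis
for the Segre product A⊗B. -/
theorem markov_basis_segre_product (dA dB J K : ℕ)
    (A : Fin dA → Fin J → ℤ) (B : Fin dB → Fin K → ℤ)
    (w : Fin dA → ℚ) (hw : ∀ j : Fin J, ∑ r : Fin dA, w r * (A r j : ℚ) = 1)
    (v : Fin dB → ℚ) (hv : ∀ k : Fin K, ∑ r : Fin dB, v r * (B r k : ℚ) = 1)
    (BA : Set (Fin J → ℤ)) (hBA : IsMarkovBasisFor (fun j r => A r j) BA)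
    (BB : Set (Fin K → ℤ)) (hBB : IsMarkovBasisFor (fun k r => B r k) BB)
    (S : Set (Fin J × Fin K → ℤ))
    (hS : S = BasicMoves J K
        ∪ {z | ∃ zA ∈ BA, IsColDistribution zA z}
        ∪ {z | ∃ zB ∈ BB, IsRowDistribution zB z}) :
    ∀ x y : Fin J × Fin K → ℕ,
      (∀ r : Fin dA,
        ∑ p : Fin J × Fin K, (x p : ℤ) * A r p.1 =
        ∑ p : Fin J × Fin K, (y p : ℤ) * A r p.1) →
      (∀ r : Fin dB,
        ∑ p : Fin J × Fin K, (x p : ℤ) * B r p.2 =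
        ∑ p : Fin J × Fin K, (y p : ℤ) * B r p.2) →
      PathConn S x y := by
  intro x y hA hB
  rw [pathConn_iff]
  -- moves in BA and BB have zero coordinate sum (homogeneity)
  have hzeroA : ∀ z ∈ BA, ∑ j, z j = 0 := by
    intro z hzmem
    have hbal := (hBA.1 z hzmem).2
    have h1 : ∀ r, (∑ j, (z j : ℚ) * (A r j : ℚ)) = 0 := by
      intro r
      have h0 : ((∑ j, z j * A r j : ℤ) : ℚ) = 0 := by rw [hbal r]; norm_num
      push_cast at h0
      exact h0
    have hq : (∑ j, (z j : ℚ)) = 0 := by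
      calc ∑ j, (z j : ℚ)
          = ∑ j, (z j : ℚ) * (∑ r, w r * (A r j : ℚ)) := by
            refine Finset.sum_congr rfl fun j _ => ?_
            rw [hw j, mul_one]
        _ = ∑ j, ∑ r, w r * ((z j : ℚ) * (A r j : ℚ)) := by
            refine Finset.sum_congr rfl fun j _ => ?_
            rw [Finset.mul_sum]
            refine Finset.sum_congr rfl fun r _ => ?_
            ring
        _ = ∑ r, ∑ j, w r * ((z j : ℚ) * (A r j : ℚ)) := Finset.sum_comm
        _ = ∑ r, w r * ∑ j, (z j : ℚ) * (A r j : ℚ) := by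
            refine Finset.sum_congr rfl fun r _ => ?_
            rw [Finset.mul_sum]
        _ = 0 := by
            refine Finset.sum_eq_zero fun r _ => ?_
            rw [h1 r, mul_zero]
    have hq2 : ((∑ j, z j : ℤ) : ℚ) = 0 := by push_cast; exact hq
    exact_mod_cast hq2
  have hzeroB : ∀ z ∈ BB, ∑ k, z k = 0 := by
    intro z hzmem
    have hbal := (hBB.1 z hzmem).2
    have h1 : ∀ r, (∑ k, (z k : ℚ) * (B r k : ℚ)) = 0 := by
      intro r
      have h0 : ((∑ k, z k * B r k : ℤ) : ℚ) = 0 := by rw [hbal r]; norm_num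
      push_cast at h0
      exact h0
    have hq : (∑ k, (z k : ℚ)) = 0 := by
      calc ∑ k, (z k : ℚ)
          = ∑ k, (z k : ℚ) * (∑ r, v r * (B r k : ℚ)) := by
            refine Finset.sum_congr rfl fun k _ => ?_
            rw [hv k, mul_one]
        _ = ∑ k, ∑ r, v r * ((z k : ℚ) * (B r k : ℚ)) := by
            refine Finset.sum_congr rfl fun k _ => ?_
            rw [Finset.mul_sum]
            refine Finset.sum_congr rfl fun r _ => ?_
            ring
        _ = ∑ r, ∑ k, v r * ((z k : ℚ) * (B r k : ℚ)) := Finset.sum_comm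
        _ = ∑ r, v r * ∑ k, (z k : ℚ) * (B r k : ℚ) := by
            refine Finset.sum_congr rfl fun r _ => ?_
            rw [Finset.mul_sum]
        _ = 0 := by
            refine Finset.sum_eq_zero fun r _ => ?_
            rw [h1 r, mul_zero]
    have hq2 : ((∑ k, z k : ℤ) : ℚ) = 0 := by push_cast; exact hq
    exact_mod_cast hq2
  -- equal A-statistics of row sums
  have hAstat : ∀ r : Fin dA,
      ∑ j, ((∑ k, x (j,k) : ℕ) : ℤ) * A r j = ∑ j, ((∑ k, y (j,k) : ℕ) : ℤ) * A r j := by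
    intro r
    have hx := hA r
    rw [Fintype.sum_prod_type, Fintype.sum_prod_type] at hx
    have e : ∀ t : Fin J × Fin K → ℕ, ∀ j : Fin J,
        ((∑ k, t (j,k) : ℕ) : ℤ) * A r j = ∑ k, (t (j,k) : ℤ) * A r j := by
      intro t j
      push_cast
      rw [Finset.sum_mul]
    rw [Finset.sum_congr rfl (fun j _ => e x j), Finset.sum_congr rfl (fun j _ => e y j)]
    exact hx
  have hpathA : Relation.ReflTransGen (Step BA)
      (fun j => ∑ k, x (j,k)) (fun j => ∑ k, y (j,k)) := by
    rw [← pathConn_iff]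
    exact hBA.2.2 _ _ hAstat
  obtain ⟨x1, hx1row, hx1col, hx1path⟩ := lift_col BA hzeroA x (fun j => ∑ k, y (j,k)) hpathA
  -- equal B-statistics of column sums of x1 and y
  have hBstat : ∀ r : Fin dB,
      ∑ k, ((∑ j, x1 (j,k) : ℕ) : ℤ) * B r k = ∑ k, ((∑ j, y (j,k) : ℕ) : ℤ) * B r k := by
    intro r
    have hxB := hB r
    rw [Fintype.sum_prod_type_right, Fintype.sum_prod_type_right] at hxB
    have e : ∀ t : Fin J × Fin K → ℕ, ∀ k : Fin K,
        ((∑ j, t (j,k) : ℕ) : ℤ) * B r k = ∑ j, (t (j,k) : ℤ) * B r k := by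
      intro t k
      push_cast
      rw [Finset.sum_mul]
    have ex1 : ∀ k : Fin K, ((∑ j, x1 (j,k) : ℕ) : ℤ) * B r k = ((∑ j, x (j,k) : ℕ) : ℤ) * B r k := by
      intro k
      rw [hx1col k]
    rw [Finset.sum_congr rfl (fun k _ => ex1 k),
      Finset.sum_congr rfl (fun k _ => e x k), Finset.sum_congr rfl (fun k _ => e y k)]
    exact hxB
  have hpathB : Relation.ReflTransGen (Step BB)
      (fun k => ∑ j, x1 (j,k)) (fun k => ∑ j, y (j,k)) := by
    rw [← pathConn_iff]
    exact hBB.2.2 _ _ hBstat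
  obtain ⟨x2, hx2col, hx2row, hx2path⟩ := lift_row BB hzeroB x1 (fun k => ∑ j, y (j,k)) hpathB
  -- finish with basic moves
  have hfin : Relation.ReflTransGen (Step (BasicMoves J K)) x2 y :=
    basic_connect x2 y (fun j => (hx2row j).trans (hx1row j)) (fun k => hx2col k)
  -- inclusions into S
  have hm1 : ∀ a b, Step {w | ∃ z ∈ BA, IsColDistribution z w} a b → Step S a b := by
    intro a b hst
    show (fun c => ((b c : ℤ) - a c)) ∈ S
    rw [hS]
    exact Or.inl (Or.inr hst)
  have hm2 : ∀ a b, Step {w | ∃ z ∈ BB, IsRowDistribution z w} a b → Step S a b := by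
    intro a b hst
    show (fun c => ((b c : ℤ) - a c)) ∈ S
    rw [hS]
    exact Or.inr hst
  have hm3 : ∀ a b, Step (BasicMoves J K) a b → Step S a b := by
    intro a b hst
    show (fun c => ((b c : ℤ) - a c)) ∈ S
    rw [hS]
    exact Or.inl (Or.inl hst)
  exact ((Relation.ReflTransGen.mono hm1 _ _ hx1path).trans (Relation.ReflTransGen.mono hm2 _ _ hx2path)).trans (Relation.ReflTransGen.mono hm3 _ _ hfin)
end

section
/- Let ℐ = {1,…,J}×{1,…,K} and let S⁺ and S⁻ be disjoint subsets of ℐ such that: (1) if (j,k) ∈ S⁺, j' ≤ j and k' ≤ k then (j',k') ∈ S⁺; (2) if (j,k) ∈ S⁻, j' ≥ j and k' ≥ k then (j',k') ∈ S⁻; (3) there are no distinct four points (j1,k1) ∈ S⁺, (j2,k2) ∈ S⁻, (j3,k3) ∈ ℐ∖S⁺, (j4,k4) ∈ S⁺ with (j1,k1) − (j2,k2) = (j3,k3) − (j4,k4), and there are no distinct four points (j1,k1) ∈ S⁻, (j2,k2) ∈ S⁺, (j3,k3) ∈ ℐ∖S⁻, (j4,k4) ∈ S⁻ with (j1,k1)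 − (j2,k2) = (j3,k3) − (j4,k4). Then there exist integers a, b, c with (a,b) ≠ (0,0) such that a·j + b·k ≤ c for all (j,k) ∈ S⁺ and a·j + b·k ≥ c for all (j,k) ∈ S⁻. -/
namespace Sep12

/-- Core induction: no point of `Sm` lies strictly below a segment joining two
points of `Sp` that straddle it. -/
lemma core (J K : ℕ) (I Sp Sm : Set (ℤ × ℤ))
    (hI : I = {p : ℤ × ℤ | 1 ≤ p.1 ∧ p.1 ≤ (J : ℤ) ∧ 1 ≤ p.2 ∧ p.2 ≤ (K : ℤ)})
    (hSp : Sp ⊆ I) (hdisj : Disjoint Sp Sm)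
    (hup : ∀ p ∈ Sm, ∀ q ∈ I, p.1 ≤ q.1 → p.2 ≤ q.2 → q ∈ Sm)
    (hpat1 : ¬ ∃ p1 p2 p3 p4 : ℤ × ℤ,
      p1 ∈ Sp ∧ p2 ∈ Sm ∧ p3 ∈ I \ Sp ∧ p4 ∈ Sp ∧
      p1 ≠ p2 ∧ p1 ≠ p3 ∧ p1 ≠ p4 ∧ p2 ≠ p3 ∧ p2 ≠ p4 ∧ p3 ≠ p4 ∧
      p1 - p2 = p3 - p4) :
    ∀ n : ℕ, ∀ u1 u2 w : ℤ × ℤ, u1 ∈ Sp → u2 ∈ Sp → w ∈ Sm →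
      u1.1 < w.1 → w.1 < u2.1 → u2.2 < w.2 → w.2 < u1.2 →
      (u2.1 - u1.1) * (w.2 - u1.2) - (u2.2 - u1.2) * (w.1 - u1.1) < 0 →
      u2.1 - u1.1 + (u1.2 - u2.2) ≤ (n : ℤ) → False := by
  intro n
  induction n with
  | zero =>
    intro u1 u2 w _ _ _ h1 h2 h3 h4 _ hb
    norm_num at hb
    linarith
  | succ n ih =>
    intro u1 u2 w hu1 hu2 hw h1 h2 h3 h4 hdet hb
    obtain ⟨ha1, ha2, ha3, ha4⟩ : 1 ≤ u1.1 ∧ u1.1 ≤ (J:ℤ) ∧ 1 ≤ u1.2 ∧ u1.2 ≤ (K:ℤ) := by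
      have := hSp hu1; rw [hI] at this; exact this
    obtain ⟨hb1, hb2, hb3, hb4⟩ : 1 ≤ u2.1 ∧ u2.1 ≤ (J:ℤ) ∧ 1 ≤ u2.2 ∧ u2.2 ≤ (K:ℤ) := by
      have := hSp hu2; rw [hI] at this; exact this
    set P : ℤ × ℤ := (u1.1 + u2.1 - w.1, u1.2 + u2.2 - w.2) with hP
    have hPI : P ∈ I := by
      rw [hI]
      refine ⟨?_, ?_, ?_, ?_⟩ <;> simp only [hP] <;> linarith
    -- P ∈ Sp
    have hu1w : u1 ≠ w := by
      intro h
      exact Set.disjoint_left.mp hdisj hu1 (h ▸ hw)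
    have hu2w : w ≠ u2 := by
      intro h
      exact Set.disjoint_left.mp hdisj hu2 (h ▸ hw)
    have hPSp : P ∈ Sp := by
      by_contra hPSp
      refine hpat1 ⟨u1, w, P, u2, hu1, hw, ⟨hPI, hPSp⟩, hu2, hu1w, ?_, ?_, ?_, ?_, ?_, ?_⟩
      · intro h
        have := congrArg Prod.fst h
        simp only [hP] at this
        linarith
      · intro h
        have := congrArg Prod.fst h
        linarith
      · intro h
        -- w = P : then det = 0
        have e1 : 2 * w.1 = u1.1 + u2.1 := by
          have := congrArg Prod.fst h; simp only [hP] at this; linarith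
        have e2 : 2 * w.2 = u1.2 + u2.2 := by
          have := congrArg Prod.snd h; simp only [hP] at this; linarith
        have hz : (2:ℤ) * ((u2.1 - u1.1) * (w.2 - u1.2) - (u2.2 - u1.2) * (w.1 - u1.1)) = 0 := by
          linear_combination (u2.1 - u1.1) * e2 - (u2.2 - u1.2) * e1
        linarith
      · intro h
        exact Set.disjoint_left.mp hdisj hu2 (h.symm ▸ hw)
      · intro h
        have := congrArg Prod.fst h
        simp only [hP] at this
        linarith
      · apply Prod.ext_iff.mpr
        constructor
        · simp only [Prod.fst_sub, hP]; ring
        · simp only [Prod.snd_sub, hP]; ring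
    have hPSm : P ∉ Sm := Set.disjoint_left.mp hdisj hPSp
    by_cases hx : 2 * w.1 ≤ u1.1 + u2.1
    · by_cases hy : 2 * w.2 ≤ u1.2 + u2.2
      · -- w ≤ P, so P ∈ Sm: contradiction
        exact hPSm (hup w hw P hPI (by simp only [hP]; linarith) (by simp only [hP]; linarith))
      · push_neg at hy
        -- exclude equality in x
        have hxs : 2 * w.1 < u1.1 + u2.1 := by
          rcases lt_or_eq_of_le hx with h | h
          · exact h
          · exfalso
            have key : (2:ℤ) * ((u2.1 - u1.1) * (w.2 - u1.2) - (u2.2 - u1.2) * (w.1 - u1.1))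
                = (u2.1 - u1.1) * (2 * w.2 - u1.2 - u2.2) := by
              linear_combination (-(u2.2 - u1.2)) * h
            nlinarith [mul_pos (show (0:ℤ) < u2.1 - u1.1 by linarith)
              (show (0:ℤ) < 2 * w.2 - u1.2 - u2.2 by linarith)]
        -- recurse with (u1, P, w)
        refine ih u1 P w hu1 hPSp hw h1 ?_ ?_ h4 ?_ ?_
        · simp only [hP]; linarith
        · simp only [hP]; linarith
        · have e : (P.1 - u1.1) * (w.2 - u1.2) - (P.2 - u1.2) * (w.1 - u1.1)
              = (u2.1 - u1.1) * (w.2 - u1.2) - (u2.2 - u1.2) * (w.1 - u1.1) := by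
            simp only [hP]; ring
          rw [e]; exact hdet
        · simp only [hP]
          push_cast at hb ⊢
          linarith
    · push_neg at hx
      by_cases hy : 2 * w.2 ≤ u1.2 + u2.2
      · -- exclude equality in y
        have hys : 2 * w.2 < u1.2 + u2.2 := by
          rcases lt_or_eq_of_le hy with h | h
          · exact h
          · exfalso
            have key : (2:ℤ) * ((u2.1 - u1.1) * (w.2 - u1.2) - (u2.2 - u1.2) * (w.1 - u1.1))
                = (u2.2 - u1.2) * (u1.1 + u2.1 - 2 * w.1) := by
              linear_combination (u2.1 - u1.1) * h
            nlinarith [mul_pos (show (0:ℤ) < u1.2 - u2.2 by linarith)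
              (show (0:ℤ) < 2 * w.1 - u1.1 - u2.1 by linarith)]
        -- recurse with (P, u2, w)
        refine ih P u2 w hPSp hu2 hw ?_ h2 h3 ?_ ?_ ?_
        · simp only [hP]; linarith
        · simp only [hP]; linarith
        · have e : (u2.1 - P.1) * (w.2 - P.2) - (u2.2 - P.2) * (w.1 - P.1)
              = (u2.1 - u1.1) * (w.2 - u1.2) - (u2.2 - u1.2) * (w.1 - u1.1) := by
            simp only [hP]; ring
          rw [e]; exact hdet
        · simp only [hP]
          push_cast at hb ⊢
          linarith
      · push_neg at hy
        -- both strict >: det > 0, contradiction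
        have t1 : (u2.1 - u1.1) * (u2.2 - u1.2) < (u2.1 - u1.1) * (2 * w.2 - 2 * u1.2) :=
          mul_lt_mul_of_pos_left (by linarith) (by linarith)
        have t2 : (u1.2 - u2.2) * (u2.1 - u1.1) < (u1.2 - u2.2) * (2 * w.1 - 2 * u1.1) :=
          mul_lt_mul_of_pos_left (by linarith) (by linarith)
        have e : 2 * ((u2.1 - u1.1) * (w.2 - u1.2) - (u2.2 - u1.2) * (w.1 - u1.1))
            = (u2.1 - u1.1) * (2 * w.2 - 2 * u1.2) + (u1.2 - u2.2) * (2 * w.1 - 2 * u1.1) := by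
          ring
        nlinarith [t1, t2]



/-- Wrapper without explicit fuel. -/
lemma coreW (J K : ℕ) (I Sp Sm : Set (ℤ × ℤ))
    (hI : I = {p : ℤ × ℤ | 1 ≤ p.1 ∧ p.1 ≤ (J : ℤ) ∧ 1 ≤ p.2 ∧ p.2 ≤ (K : ℤ)})
    (hSp : Sp ⊆ I) (hdisj : Disjoint Sp Sm)
    (hup : ∀ p ∈ Sm, ∀ q ∈ I, p.1 ≤ q.1 → p.2 ≤ q.2 → q ∈ Sm)
    (hpat1 : ¬ ∃ p1 p2 p3 p4 : ℤ × ℤ,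
      p1 ∈ Sp ∧ p2 ∈ Sm ∧ p3 ∈ I \ Sp ∧ p4 ∈ Sp ∧
      p1 ≠ p2 ∧ p1 ≠ p3 ∧ p1 ≠ p4 ∧ p2 ≠ p3 ∧ p2 ≠ p4 ∧ p3 ≠ p4 ∧
      p1 - p2 = p3 - p4) :
    ∀ u1 u2 w : ℤ × ℤ, u1 ∈ Sp → u2 ∈ Sp → w ∈ Sm →
      u1.1 < w.1 → w.1 < u2.1 → u2.2 < w.2 → w.2 < u1.2 →
      (u2.1 - u1.1) * (w.2 - u1.2) - (u2.2 - u1.2) * (w.1 - u1.1) < 0 → False := by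
  intro u1 u2 w hu1 hu2 hw h1 h2 h3 h4 hdet
  exact core J K I Sp Sm hI hSp hdisj hup hpat1
    (u2.1 - u1.1 + (u1.2 - u2.2)).toNat u1 u2 w hu1 hu2 hw h1 h2 h3 h4 hdet
    (Int.self_le_toNat _)

/-- Symmetric version: no point of `Sp` lies strictly above a segment joining
two points of `Sm` that straddle it.  Proved by reflecting through the centre
of the grid and applying `coreW` with the two patterns swapped. -/
lemma coreV' (J K : ℕ) (I Sp Sm : Set (ℤ × ℤ))
    (hI : I = {p : ℤ × ℤ | 1 ≤ p.1 ∧ p.1 ≤ (J : ℤ) ∧ 1 ≤ p.2 ∧ p.2 ≤ (K : ℤ)})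
    (hSp : Sp ⊆ I) (hSm : Sm ⊆ I) (hdisj : Disjoint Sp Sm)
    (hlow : ∀ p ∈ Sp, ∀ q ∈ I, q.1 ≤ p.1 → q.2 ≤ p.2 → q ∈ Sp)
    (hpat2 : ¬ ∃ p1 p2 p3 p4 : ℤ × ℤ,
      p1 ∈ Sm ∧ p2 ∈ Sp ∧ p3 ∈ I \ Sm ∧ p4 ∈ Sm ∧
      p1 ≠ p2 ∧ p1 ≠ p3 ∧ p1 ≠ p4 ∧ p2 ≠ p3 ∧ p2 ≠ p4 ∧ p3 ≠ p4 ∧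
      p1 - p2 = p3 - p4) :
    ∀ w1 w2 u : ℤ × ℤ, w1 ∈ Sm → w2 ∈ Sm → u ∈ Sp →
      w1.1 < u.1 → u.1 < w2.1 → w2.2 < u.2 → u.2 < w1.2 →
      0 < (w2.1 - w1.1) * (u.2 - w1.2) - (w2.2 - w1.2) * (u.1 - w1.1) → False := by
  intro w1 w2 u hw1 hw2 hu h1 h2 h3 h4 hdet
  set ρ : ℤ × ℤ → ℤ × ℤ := fun p => ((J : ℤ) + 1 - p.1, (K : ℤ) + 1 - p.2) with hρ
  have hρρ : ∀ p, ρ (ρ p) = p := by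
    intro p; simp only [hρ]; ext <;> simp <;> ring
  have hmem : ∀ (S : Set (ℤ × ℤ)) (p : ℤ × ℤ), p ∈ ρ '' S ↔ ρ p ∈ S := by
    intro S p
    constructor
    · rintro ⟨q, hq, rfl⟩; rwa [hρρ]
    · intro h; exact ⟨ρ p, h, hρρ p⟩
  have hρI : ∀ p, p ∈ I → ρ p ∈ I := by
    intro p hp
    rw [hI] at hp ⊢
    obtain ⟨c1, c2, c3, c4⟩ := hp
    exact ⟨by simp only [hρ]; linarith, by simp only [hρ]; linarith,
      by simp only [hρ]; linarith, by simp only [hρ]; linarith⟩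
  have hρinj : ∀ p q : ℤ × ℤ, ρ p = ρ q → p = q := by
    intro p q h
    have := congrArg ρ h
    rwa [hρρ, hρρ] at this
  have hρsub : ∀ p q : ℤ × ℤ, ρ p - ρ q = q - p := by
    intro p q
    apply Prod.ext_iff.mpr
    constructor <;> simp [hρ] <;> ring
  -- reflected sets
  set Sp' : Set (ℤ × ℤ) := ρ '' Sm with hSp'def
  set Sm' : Set (ℤ × ℤ) := ρ '' Sp with hSm'def
  have hSp'I : Sp' ⊆ I := by
    rintro x hx
    rw [hSp'def, hmem] at hx
    have := hρI _ (hSm hx)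
    rwa [hρρ] at this
  have hdisj' : Disjoint Sp' Sm' := by
    rw [Set.disjoint_left]
    intro x hx hx'
    rw [hSp'def, hmem] at hx
    rw [hSm'def, hmem] at hx'
    exact Set.disjoint_left.mp hdisj hx' hx
  have hup' : ∀ p ∈ Sm', ∀ q ∈ I, p.1 ≤ q.1 → p.2 ≤ q.2 → q ∈ Sm' := by
    intro p hp q hq e1 e2
    rw [hSm'def, hmem] at hp ⊢
    refine hlow _ hp _ (hρI _ hq) ?_ ?_ <;> simp only [hρ] <;> linarith
  have hpat1' : ¬ ∃ p1 p2 p3 p4 : ℤ × ℤ,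
      p1 ∈ Sp' ∧ p2 ∈ Sm' ∧ p3 ∈ I \ Sp' ∧ p4 ∈ Sp' ∧
      p1 ≠ p2 ∧ p1 ≠ p3 ∧ p1 ≠ p4 ∧ p2 ≠ p3 ∧ p2 ≠ p4 ∧ p3 ≠ p4 ∧
      p1 - p2 = p3 - p4 := by
    rintro ⟨p1, p2, p3, p4, m1, m2, ⟨m3I, m3n⟩, m4, d12, d13, d14, d23, d24, d34, hdiff⟩
    rw [hSp'def, hmem] at m1 m4
    rw [hSm'def, hmem] at m2
    rw [hSp'def] at m3n
    rw [hmem] at m3n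
    refine hpat2 ⟨ρ p1, ρ p2, ρ p3, ρ p4, m1, m2, ⟨hρI _ m3I, m3n⟩, m4,
      fun h => d12 (hρinj _ _ h), fun h => d13 (hρinj _ _ h), fun h => d14 (hρinj _ _ h),
      fun h => d23 (hρinj _ _ h), fun h => d24 (hρinj _ _ h), fun h => d34 (hρinj _ _ h), ?_⟩
    rw [hρsub, hρsub]
    have : p2 - p1 = p4 - p3 := by
      apply Prod.ext_iff.mpr
      have e1 := congrArg Prod.fst hdiff
      have e2 := congrArg Prod.snd hdiff
      simp only [Prod.fst_sub, Prod.snd_sub] at e1 e2 ⊢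
      constructor <;> linarith
    exact this
  -- apply coreW to the reflected triple
  refine coreW J K I Sp' Sm' hI hSp'I hdisj' hup' hpat1'
    (ρ w2) (ρ w1) (ρ u) ?_ ?_ ?_ ?_ ?_ ?_ ?_ ?_
  · rw [hSp'def, hmem, hρρ]; exact hw2
  · rw [hSp'def, hmem, hρρ]; exact hw1
  · rw [hSm'def, hmem, hρρ]; exact hu
  · simp only [hρ]; linarith
  · simp only [hρ]; linarith
  · simp only [hρ]; linarith
  · simp only [hρ]; linarith
  · have e : ((ρ w1).1 - (ρ w2).1) * ((ρ u).2 - (ρ w2).2)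
        - ((ρ w1).2 - (ρ w2).2) * ((ρ u).1 - (ρ w2).1)
        = -((w2.1 - w1.1) * (u.2 - w1.2) - (w2.2 - w1.2) * (u.1 - w1.1)) := by
      simp only [hρ]; ring
    rw [e]; linarith



end Sep12


set_option maxHeartbeats 1000000 in
/-- separation lemma: if S⁺ and S⁻ are disjoint subsets of the
grid ℐ = {1,…,J}×{1,…,K} ⊂ ℤ², S⁺ is a lower set, S⁻ is an upper set, and
neither of the two forbidden four-point difference patterns occurs, then S⁺
and S⁻ are separated by a line with integer coefficients. -/
theorem separation_lemma (J K : ℕ) (hJ : 1 ≤ J) (hK : 1 ≤ K)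
    (I Sp Sm : Set (ℤ × ℤ))
    (hI : I = {p : ℤ × ℤ | 1 ≤ p.1 ∧ p.1 ≤ (J : ℤ) ∧ 1 ≤ p.2 ∧ p.2 ≤ (K : ℤ)})
    (hSp : Sp ⊆ I) (hSm : Sm ⊆ I) (hdisj : Disjoint Sp Sm)
    (hlow : ∀ p ∈ Sp, ∀ q ∈ I, q.1 ≤ p.1 → q.2 ≤ p.2 → q ∈ Sp)
    (hup : ∀ p ∈ Sm, ∀ q ∈ I, p.1 ≤ q.1 → p.2 ≤ q.2 → q ∈ Sm)
    (hpat1 : ¬ ∃ p1 p2 p3 p4 : ℤ × ℤ,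
      p1 ∈ Sp ∧ p2 ∈ Sm ∧ p3 ∈ I \ Sp ∧ p4 ∈ Sp ∧
      p1 ≠ p2 ∧ p1 ≠ p3 ∧ p1 ≠ p4 ∧ p2 ≠ p3 ∧ p2 ≠ p4 ∧ p3 ≠ p4 ∧
      p1 - p2 = p3 - p4)
    (hpat2 : ¬ ∃ p1 p2 p3 p4 : ℤ × ℤ,
      p1 ∈ Sm ∧ p2 ∈ Sp ∧ p3 ∈ I \ Sm ∧ p4 ∈ Sm ∧
      p1 ≠ p2 ∧ p1 ≠ p3 ∧ p1 ≠ p4 ∧ p2 ≠ p3 ∧ p2 ≠ p4 ∧ p3 ≠ p4 ∧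
      p1 - p2 = p3 - p4) :
    ∃ a b c : ℤ, (a, b) ≠ (0, 0) ∧
      (∀ p ∈ Sp, a * p.1 + b * p.2 ≤ c) ∧
      (∀ p ∈ Sm, c ≤ a * p.1 + b * p.2) := by
  classical
  rcases Set.eq_empty_or_nonempty Sp with hSpE | ⟨u₀, hu₀⟩
  · refine ⟨1, 0, 1, by simp, ?_, ?_⟩
    · intro p hp; rw [hSpE] at hp; exact absurd hp (Set.notMem_empty p)
    · intro p hp
      have hm := hSm hp; rw [hI] at hm
      obtain ⟨c1, _, _, _⟩ := hm
      linarith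
  rcases Set.eq_empty_or_nonempty Sm with hSmE | ⟨w₀, hw₀⟩
  · refine ⟨1, 0, (J : ℤ), by simp, ?_, ?_⟩
    · intro p hp
      have hm := hSp hp; rw [hI] at hm
      obtain ⟨_, c2, _, _⟩ := hm
      linarith
    · intro p hp; rw [hSmE] at hp; exact absurd hp (Set.notMem_empty p)
  have hIfin : I.Finite := by
    rw [hI]
    apply (Set.finite_Icc ((1:ℤ), (1:ℤ)) ((J:ℤ), (K:ℤ))).subset
    rintro ⟨x, y⟩ ⟨c1, c2, c3, c4⟩
    exact Set.mem_Icc.mpr ⟨⟨c1, c3⟩, ⟨c2, c4⟩⟩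
  have hSpfin := hIfin.subset hSp
  have hSmfin := hIfin.subset hSm
  set SpF := hSpfin.toFinset with hSpF
  set SmF := hSmfin.toFinset with hSmF
  have nondom : ∀ u ∈ Sp, ∀ w ∈ Sm, w.1 ≤ u.1 → w.2 ≤ u.2 → False := by
    intro u hu w hw e1 e2
    exact Set.disjoint_left.mp hdisj hu (hup w hw u (hSp hu) e1 e2)
  set T1F := (SpF ×ˢ SmF).filter (fun x => x.2.1 < x.1.1) with hT1F
  set T2F := (SpF ×ˢ SmF).filter (fun x => x.2.2 < x.1.2) with hT2F
  have memT1 : ∀ u ∈ Sp, ∀ w ∈ Sm, w.1 < u.1 → (u, w) ∈ T1F := by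
    intro u hu w hw hlt
    rw [hT1F, Finset.mem_filter, Finset.mem_product]
    exact ⟨⟨hSpfin.mem_toFinset.mpr hu, hSmfin.mem_toFinset.mpr hw⟩, hlt⟩
  have memT2 : ∀ u ∈ Sp, ∀ w ∈ Sm, w.2 < u.2 → (u, w) ∈ T2F := by
    intro u hu w hw hlt
    rw [hT2F, Finset.mem_filter, Finset.mem_product]
    exact ⟨⟨hSpfin.mem_toFinset.mpr hu, hSmfin.mem_toFinset.mpr hw⟩, hlt⟩
  rcases T1F.eq_empty_or_nonempty with hT1E | hT1N
  · obtain ⟨z, hzm, hzmax⟩ := Finset.exists_max_image SpF (fun u => u.1)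
      ⟨u₀, hSpfin.mem_toFinset.mpr hu₀⟩
    have hz' : z ∈ Sp := hSpfin.mem_toFinset.mp hzm
    refine ⟨1, 0, z.1, by simp, ?_, ?_⟩
    · intro p hp
      have := hzmax p (hSpfin.mem_toFinset.mpr hp)
      linarith
    · intro p hp
      have hnlt : ¬ (p.1 < z.1) := by
        intro hlt
        have := memT1 z hz' p hp hlt
        rw [hT1E] at this
        exact absurd this (Finset.notMem_empty _)
      push_neg at hnlt
      linarith
  rcases T2F.eq_empty_or_nonempty with hT2E | hT2N
  · obtain ⟨z, hzm, hzmax⟩ := Finset.exists_max_image SpF (fun u => u.2)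
      ⟨u₀, hSpfin.mem_toFinset.mpr hu₀⟩
    have hz' : z ∈ Sp := hSpfin.mem_toFinset.mp hzm
    refine ⟨0, 1, z.2, by simp, ?_, ?_⟩
    · intro p hp
      have := hzmax p (hSpfin.mem_toFinset.mpr hp)
      linarith
    · intro p hp
      have hnlt : ¬ (p.2 < z.2) := by
        intro hlt
        have := memT2 z hz' p hp hlt
        rw [hT2E] at this
        exact absurd this (Finset.notMem_empty _)
      push_neg at hnlt
      linarith
  -- extremal pairs
  obtain ⟨⟨u1, w1⟩, hx1mem, hx1min⟩ := Finset.exists_min_image T1F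
    (fun x => ((x.2.2 - x.1.2 : ℤ) : ℚ) / ((x.1.1 - x.2.1 : ℤ) : ℚ)) hT1N
  obtain ⟨⟨u2, w2⟩, hx2mem, hx2max⟩ := Finset.exists_max_image T2F
    (fun x => ((x.1.2 - x.2.2 : ℤ) : ℚ) / ((x.2.1 - x.1.1 : ℤ) : ℚ)) hT2N
  rw [hT1F, Finset.mem_filter, Finset.mem_product] at hx1mem
  rw [hT2F, Finset.mem_filter, Finset.mem_product] at hx2mem
  obtain ⟨⟨hu1F, hw1F⟩, hp1⟩ := hx1mem
  obtain ⟨⟨hu2F, hw2F⟩, hs1⟩ := hx2mem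
  have hu1 : u1 ∈ Sp := hSpfin.mem_toFinset.mp hu1F
  have hw1 : w1 ∈ Sm := hSmfin.mem_toFinset.mp hw1F
  have hu2 : u2 ∈ Sp := hSpfin.mem_toFinset.mp hu2F
  have hw2 : w2 ∈ Sm := hSmfin.mem_toFinset.mp hw2F
  simp only at hp1 hs1
  have hq1 : u1.2 < w1.2 := by
    by_contra h
    push_neg at h
    exact nondom u1 hu1 w1 hw1 (le_of_lt hp1) h
  have hr1 : u2.1 < w2.1 := by
    by_contra h
    push_neg at h
    exact nondom u2 hu2 w2 hw2 h (le_of_lt hs1)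
  -- cross-multiplied extremality
  have hmin1 : ∀ u ∈ Sp, ∀ w ∈ Sm, w.1 < u.1 →
      (w1.2 - u1.2) * (u.1 - w.1) ≤ (w.2 - u.2) * (u1.1 - w1.1) := by
    intro u hu w hw hlt
    have h := hx1min (u, w) (memT1 u hu w hw hlt)
    simp only at h
    have d1 : (0:ℚ) < ((u1.1 - w1.1 : ℤ) : ℚ) := by
      exact_mod_cast (show (0:ℤ) < u1.1 - w1.1 by linarith)
    have d2 : (0:ℚ) < ((u.1 - w.1 : ℤ) : ℚ) := by
      exact_mod_cast (show (0:ℤ) < u.1 - w.1 by linarith)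
    rw [div_le_div_iff₀ d1 d2] at h
    exact_mod_cast h
  have hmax2 : ∀ u ∈ Sp, ∀ w ∈ Sm, w.2 < u.2 →
      (u.2 - w.2) * (w2.1 - u2.1) ≤ (u2.2 - w2.2) * (w.1 - u.1) := by
    intro u hu w hw hlt
    have hlt1 : u.1 < w.1 := by
      by_contra h
      push_neg at h
      exact nondom u hu w hw h (le_of_lt hlt)
    have h := hx2max (u, w) (memT2 u hu w hw hlt)
    simp only at h
    have d1 : (0:ℚ) < ((w.1 - u.1 : ℤ) : ℚ) := by
      exact_mod_cast (show (0:ℤ) < w.1 - u.1 by linarith)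
    have d2 : (0:ℚ) < ((w2.1 - u2.1 : ℤ) : ℚ) := by
      exact_mod_cast (show (0:ℤ) < w2.1 - u2.1 by linarith)
    rw [div_le_div_iff₀ d1 d2] at h
    exact_mod_cast h
  by_cases hC : (u1.1 - w1.1) * (u2.2 - w2.2) ≤ (w1.2 - u1.2) * (w2.1 - u2.1)
  · -- separable with direction (q, p)
    have key : ∀ u ∈ Sp, ∀ w ∈ Sm,
        (w1.2 - u1.2) * u.1 + (u1.1 - w1.1) * u.2
          ≤ (w1.2 - u1.2) * w.1 + (u1.1 - w1.1) * w.2 := by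
      intro u hu w hw
      rcases lt_or_ge w.1 u.1 with h | h
      · have := hmin1 u hu w hw h
        linarith [this]
      · rcases le_or_gt u.2 w.2 with h2 | h2
        · have m1 : (w1.2 - u1.2) * u.1 ≤ (w1.2 - u1.2) * w.1 :=
            mul_le_mul_of_nonneg_left h (by linarith)
          have m2 : (u1.1 - w1.1) * u.2 ≤ (u1.1 - w1.1) * w.2 :=
            mul_le_mul_of_nonneg_left h2 (by linarith)
          linarith
        · have hm := hmax2 u hu w hw h2
          have hlt1 : u.1 < w.1 := by
            by_contra hcc
            push_neg at hcc
            exact nondom u hu w hw hcc (le_of_lt h2)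
          have m1 : (u1.1 - w1.1) * ((u.2 - w.2) * (w2.1 - u2.1))
              ≤ (u1.1 - w1.1) * ((u2.2 - w2.2) * (w.1 - u.1)) :=
            mul_le_mul_of_nonneg_left hm (by linarith)
          have m2 : ((u1.1 - w1.1) * (u2.2 - w2.2)) * (w.1 - u.1)
              ≤ ((w1.2 - u1.2) * (w2.1 - u2.1)) * (w.1 - u.1) :=
            mul_le_mul_of_nonneg_right hC (by linarith)
          have m3 : ((u1.1 - w1.1) * (u.2 - w.2)) * (w2.1 - u2.1)
              ≤ ((w1.2 - u1.2) * (w.1 - u.1)) * (w2.1 - u2.1) := by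
            linarith [m1, m2]
          have m4 : (u1.1 - w1.1) * (u.2 - w.2) ≤ (w1.2 - u1.2) * (w.1 - u.1) :=
            le_of_mul_le_mul_right m3 (by linarith)
          linarith [m4]
    obtain ⟨z, hzm, hzmax⟩ := Finset.exists_max_image SpF
      (fun u => (w1.2 - u1.2) * u.1 + (u1.1 - w1.1) * u.2)
      ⟨u₀, hSpfin.mem_toFinset.mpr hu₀⟩
    have hz' : z ∈ Sp := hSpfin.mem_toFinset.mp hzm
    refine ⟨w1.2 - u1.2, u1.1 - w1.1, (w1.2 - u1.2) * z.1 + (u1.1 - w1.1) * z.2, ?_, ?_, ?_⟩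
    · intro h
      rw [Prod.mk.injEq] at h
      have := h.1
      linarith
    · intro p hp
      exact hzmax p (hSpfin.mem_toFinset.mpr hp)
    · intro p hp
      exact key z hz' p hp
  · push_neg at hC
    exfalso
    rcases lt_or_ge w2.1 u1.1 with hXp | hXp
    · rcases lt_or_ge u1.2 w2.2 with hYq | hYq
      · -- Case A
        have E1 := hmin1 u1 hu1 w2 hw2 hXp
        have hdet2 : (u1.1 - u2.1) * (w2.2 - u2.2) - (u1.2 - u2.2) * (w2.1 - u2.1) < 0 := by
          rcases lt_or_ge w1.2 u2.2 with hA1 | hA2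
          · have E4 := hmax2 u2 hu2 w1 hw1 hA1
            linarith [E4, hC]
          · rcases le_or_gt u2.1 w1.1 with hA2b | hA3
            · have m1 : (u2.2 - w2.2) * (w2.1 - w1.1) ≤ (u2.2 - w2.2) * (w2.1 - u2.1) :=
                mul_le_mul_of_nonneg_left (by linarith) (by linarith)
              have m2 : (w2.1 - u2.1) * (w2.2 - w1.2) ≤ (w2.1 - u2.1) * (w2.2 - u2.2) :=
                mul_le_mul_of_nonneg_left (by linarith) (by linarith)
              linarith [m1, m2, hC]
            · have E2 := hmin1 u2 hu2 w1 hw1 hA3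
              linarith [E1, E2, hC]
        exact Sep12.coreW J K I Sp Sm hI hSp hdisj hup hpat1 u2 u1 w2 hu2 hu1 hw2
          hr1 hXp hYq hs1 hdet2
      · exact nondom u1 hu1 w2 hw2 (le_of_lt hXp) hYq
    · rcases lt_or_ge w2.2 u1.2 with hYq | hYq
      · rcases eq_or_lt_of_le hXp with hXeq | hXlt
        · exact nondom u1 hu1 w2 hw2 (le_of_eq hXeq.symm) (le_of_lt hYq)
        · -- Case B
          have E3 := hmax2 u1 hu1 w2 hw2 hYq
          have hdet3 : 0 < (w2.1 - w1.1) * (u1.2 - w1.2) - (w2.2 - w1.2) * (u1.1 - w1.1) := by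
            rcases lt_or_ge w1.1 u2.1 with hB1 | hB2
            · have E2 := hmin1 u2 hu2 w1 hw1 hB1
              linarith [E2, hC]
            · rcases lt_or_ge w1.2 u2.2 with hB2a | hB2b
              · have E4 := hmax2 u2 hu2 w1 hw1 hB2a
                linarith [E3, E4, hC]
              · have m1 : (u2.2 - w2.2) * (w2.1 - w1.1) ≤ (u2.2 - w2.2) * (w2.1 - u2.1) :=
                  mul_le_mul_of_nonneg_left (by linarith) (by linarith)
                have m2 : (w2.1 - u2.1) * (w2.2 - w1.2) ≤ (w2.1 - u2.1) * (w2.2 - u2.2) :=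
                  mul_le_mul_of_nonneg_left (by linarith) (by linarith)
                linarith [E3, m1, m2, hC]
          exact Sep12.coreV' J K I Sp Sm hI hSp hSm hdisj hlow hpat2 w1 w2 u1
            hw1 hw2 hu1 hp1 hXlt hYq hq1 hdet3
      · -- Case D
        rcases lt_or_ge u2.1 w1.1 with hD1 | hD2a
        · rcases lt_or_ge w1.2 u2.2 with hD1a | hD1b
          · have m1 : (w1.2 - u1.2) * (u1.1 - w1.1) ≤ (w1.2 - u1.2) * (w2.1 - w1.1) :=
              mul_le_mul_of_nonneg_left (by linarith) (by linarith)
            have m2 : (u1.1 - w1.1) * (u1.2 - w1.2) ≤ (u1.1 - w1.1) * (w2.2 - w1.2) :=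
              mul_le_mul_of_nonneg_left (by linarith) (by linarith)
            have hdetI : (u1.1 - u2.1) * (w1.2 - u2.2) - (u1.2 - u2.2) * (w1.1 - u2.1) < 0 := by
              linarith [m1, m2, hC]
            exact Sep12.coreW J K I Sp Sm hI hSp hdisj hup hpat1 u2 u1 w1 hu2 hu1 hw1
              hD1 hp1 hq1 hD1a hdetI
          · have m1 : (u1.1 - w1.1) * (u2.2 - w2.2) ≤ (u1.1 - w1.1) * (w1.2 - u1.2) :=
              mul_le_mul_of_nonneg_left (by linarith) (by linarith)
            have m2 : (u1.1 - w1.1) * (w1.2 - u1.2) < (w2.1 - u2.1) * (w1.2 - u1.2) :=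
              mul_lt_mul_of_pos_right (by linarith) (by linarith)
            linarith [hC]
        · have hD2b : u2.2 < w1.2 := by
            by_contra h
            push_neg at h
            exact nondom u2 hu2 w1 hw1 hD2a h
          rcases eq_or_lt_of_le hD2a with hDeq | hDlt
          · have m1 : (u1.1 - w1.1) * (u2.2 - w2.2) < (u1.1 - w1.1) * (w1.2 - u1.2) :=
              mul_lt_mul_of_pos_left (by linarith) (by linarith)
            have m2 : (u1.1 - w1.1) * (w1.2 - u1.2) ≤ (w2.1 - u2.1) * (w1.2 - u1.2) :=
              mul_le_mul_of_nonneg_right (by linarith) (by linarith)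
            linarith [hC]
          · have m1 : (u2.2 - w2.2) * (u1.1 - w1.1) ≤ (u2.2 - w2.2) * (w2.1 - w1.1) :=
              mul_le_mul_of_nonneg_left (by linarith) (by linarith)
            have m2 : (w2.1 - u2.1) * (u1.2 - w1.2) ≤ (w2.1 - u2.1) * (w2.2 - w1.2) :=
              mul_le_mul_of_nonneg_left (by linarith) (by linarith)
            have hdetIV : 0 < (w2.1 - w1.1) * (u2.2 - w1.2) - (w2.2 - w1.2) * (u2.1 - w1.1) := by
              linarith [m1, m2, hC]
            exact Sep12.coreV' J K I Sp Sm hI hSp hSm hdisj hlow hpat2 w1 w2 u2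
              hw1 hw2 hu2 hDlt hr1 hs1 hD2b hdetIV
end

section
/- Let z ∈ ℤ^{J×K} satisfy Σ_{j,k} z_{jk} = 0, Σ_{j,k} j·z_{jk} = 0 and Σ_{j,k} k·z_{jk} = 0, and suppose there are integers a, b, c such that z_{jk} > 0 implies a·j + b·k ≤ c and z_{jk} < 0 implies a·j + b·k ≥ c. Then z_{jk} ≠ 0 implies a·j + b·k = c; that is, the support of z is contained in the separating line. -/
/-- if z ∈ ℤ^{J×K} has zero sum and zero weighted sums in both
coordinates, and a line a·j + b·k = c weakly separates the positive support
of z from the negative support, then the whole support of z lies on the line.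
Levels are represented by `j : Fin J`, `k : Fin K` with values
`(j : ℕ) + 1`, `(k : ℕ) + 1`. -/
theorem support_on_separating_line (J K : ℕ)
    (z : Fin J → Fin K → ℤ)
    (hsum : ∑ j : Fin J, ∑ k : Fin K, z j k = 0)
    (hj : ∑ j : Fin J, ∑ k : Fin K, (((j : ℕ) : ℤ) + 1) * z j k = 0)
    (hk : ∑ j : Fin J, ∑ k : Fin K, (((k : ℕ) : ℤ) + 1) * z j k = 0)
    (a b c : ℤ)
    (hpos : ∀ (j : Fin J) (k : Fin K), 0 < z j k →
      a * (((j : ℕ) : ℤ) + 1) + b * (((k : ℕ) : ℤ) + 1) ≤ c)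
    (hneg : ∀ (j : Fin J) (k : Fin K), z j k < 0 →
      c ≤ a * (((j : ℕ) : ℤ) + 1) + b * (((k : ℕ) : ℤ) + 1)) :
    ∀ (j : Fin J) (k : Fin K), z j k ≠ 0 →
      a * (((j : ℕ) : ℤ) + 1) + b * (((k : ℕ) : ℤ) + 1) = c := by
  set f : Fin J → Fin K → ℤ := fun j k =>
    (c - (a * (((j : ℕ) : ℤ) + 1) + b * (((k : ℕ) : ℤ) + 1))) * z j k with hf
  have hS : ∑ j : Fin J, ∑ k : Fin K, f j k = 0 := by
    have : ∑ j : Fin J, ∑ k : Fin K, f j k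
        = c * (∑ j : Fin J, ∑ k : Fin K, z j k)
          - a * (∑ j : Fin J, ∑ k : Fin K, (((j : ℕ) : ℤ) + 1) * z j k)
          - b * (∑ j : Fin J, ∑ k : Fin K, (((k : ℕ) : ℤ) + 1) * z j k) := by
      simp only [Finset.mul_sum, ← Finset.sum_sub_distrib]
      refine Finset.sum_congr rfl fun j _ => Finset.sum_congr rfl fun k _ => ?_
      simp only [hf]; ring
    rw [this, hsum, hj, hk]; ring
  have hnn : ∀ j k, 0 ≤ f j k := by
    intro j k
    rcases lt_trichotomy (z j k) 0 with h | h | h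
    · exact mul_nonneg_of_nonpos_of_nonpos (by linarith [hneg j k h]) h.le
    · simp [hf, h]
    · exact mul_nonneg (by linarith [hpos j k h]) h.le
  have houter := (Finset.sum_eq_zero_iff_of_nonneg
    (fun j _ => Finset.sum_nonneg fun k _ => hnn j k)).mp hS
  intro j k hz0
  have hterm : f j k = 0 := by
    have := (Finset.sum_eq_zero_iff_of_nonneg
      (fun k _ => hnn j k)).mp (houter j (Finset.mem_univ j)) k (Finset.mem_univ k)
    exact this
  rcases mul_eq_zero.mp hterm with h | h
  · linarith
  · exact absurd h hz0
end
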